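/- The map R_{α,β}(x,y) = (y + (α−β)/(x−y), x + (α−β)/(x−y)) (the F_V map) satisfies the parametric Yang–Baxter equation R²³_{β,γ} ∘ R¹³_{α,γ} ∘ R¹²_{α,β} = R¹²_{α,β} ∘ R¹³_{α,γ} ∘ R²³_{β,γ}, wherever defined. -/
import Mathlib


noncomputable section

/-- First component of the map. -/
def uYB (α β x y : ℂ) : ℂ := y + (α-β)/(x-y)

/-- Second component of the map. -/
def vYB (α β x y : ℂ) : ℂ := x + (α-β)/(x-y)

/-- The denominator appearing in the map. -/
def dYB (α β x y : ℂ) : ℂ := x-y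

set_option maxHeartbeats 1000000 in
/-- the F_V map `R_(α,β)(x,y) = (y+(α−β)/(x−y), x+(α−β)/(x−y))` satisfies the parametric Yang–Baxter equation
`R²³ ∘ R¹³ ∘ R¹² = R¹² ∘ R¹³ ∘ R²³` on `ℂ³`, wherever all denominators are nonzero. -/
theorem FV_YangBaxter (α β γ x y z : ℂ)
    (x₁ y₁ x₂ z₁ y₂ z₂ ty tz tx tzz txx tyy : ℂ)
    -- left-hand side  R²³_(β,γ) ∘ R¹³_(α,γ) ∘ R¹²_(α,β) (x,y,z):
    (hx₁ : x₁ = uYB α β x y) (hy₁ : y₁ = vYB α β x y)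
    (hx₂ : x₂ = uYB α γ x₁ z) (hz₁ : z₁ = vYB α γ x₁ z)
    (hy₂ : y₂ = uYB β γ y₁ z₁) (hz₂ : z₂ = vYB β γ y₁ z₁)
    -- right-hand side  R¹²_(α,β) ∘ R¹³_(α,γ) ∘ R²³_(β,γ) (x,y,z):
    (hty : ty = uYB β γ y z) (htz : tz = vYB β γ y z)
    (htx : tx = uYB α γ x tz) (htzz : tzz = vYB α γ x tz)
    (htxx : txx = uYB α β tx ty) (htyy : tyy = vYB α β tx ty)
    -- all denominators nonzero:
    (h1 : dYB α β x y ≠ 0) (h2 : dYB α γ x₁ z ≠ 0) (h3 : dYB β γ y₁ z₁ ≠ 0)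
    (h4 : dYB β γ y z ≠ 0) (h5 : dYB α γ x tz ≠ 0) (h6 : dYB α β tx ty ≠ 0) :
    x₂ = txx ∧ y₂ = tyy ∧ z₂ = tzz := by
  simp only [uYB, vYB, dYB] at *
  set D : ℂ := (y-z)*(x-y) + (α-β) with hD
  set E : ℂ := (x-y)*(y-z) - (β-γ) with hE
  have hp : x - y ≠ 0 := h1
  have hq : y - z ≠ 0 := h4
  have e2 : x₁ - z = D / (x-y) := by rw [hx₁]; field_simp; ring
  have hD0 : D ≠ 0 := by
    intro h; apply h2; rw [e2, h, zero_div]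
  have e5 : x - tz = E / (y-z) := by rw [htz]; field_simp; ring
  have hE0 : E ≠ 0 := by
    intro h; apply h5; rw [e5, h, zero_div]
  have cx₂ : x₂ = z + (α-γ)*(x-y)/D := by
    rw [hx₂, e2, div_div_eq_mul_div]
  have cz₁ : z₁ = y + (α-β)/(x-y) + (α-γ)*(x-y)/D := by
    rw [hz₁, e2, hx₁, div_div_eq_mul_div]
  have cy₁ : y₁ = x + (α-β)/(x-y) := hy₁
  have e3 : y₁ - z₁ = (x-y)*E/D := by
    rw [cy₁, cz₁]; field_simp; ring
  have cy₂ : y₂ = z₁ + (β-γ)*D/((x-y)*E) := by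
    rw [hy₂, e3, div_div_eq_mul_div]
  have cz₂ : z₂ = y₁ + (β-γ)*D/((x-y)*E) := by
    rw [hz₂, e3, div_div_eq_mul_div]
  have cty : ty = z + (β-γ)/(y-z) := hty
  have ctz : tz = y + (β-γ)/(y-z) := htz
  have ctx : tx = tz + (α-γ)*(y-z)/E := by
    rw [htx, e5, div_div_eq_mul_div]
  have ctzz : tzz = x + (α-γ)*(y-z)/E := by
    rw [htzz, e5, div_div_eq_mul_div]
  have e6 : tx - ty = (y-z)*D/E := by
    rw [ctx, cty, ctz]; field_simp; ring
  have ctxx : txx = ty + (α-β)*E/((y-z)*D) := by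
    rw [htxx, e6, div_div_eq_mul_div]
  have ctyy : tyy = tx + (α-β)*E/((y-z)*D) := by
    rw [htyy, e6, div_div_eq_mul_div]
  refine ⟨?_, ?_, ?_⟩
  · rw [cx₂, ctxx, cty]; field_simp; ring
  · rw [cy₂, ctyy, cz₁, ctx, ctz]; field_simp; ring
  · rw [cz₂, ctzz, cy₁]; field_simp; ring

end
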